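/- The m+2 polynomials y^{i-1}(1 - λ_i² y²) for 1 ≤ i ≤ m together with (y+1)∏_{i=1}^m (y + λ_i) and (y−1)∏_{i=1}^m (y − λ_i) are linearly independent over ℂ, provided all λ_i are positive reals. -/

import Mathlib

open Polynomial

noncomputable def wgt (L : ℕ → ℝ) (s t : ℝ) : ℕ → ℝ
  | 0 => s
  | 1 => t
  | k + 2 => wgt L s t k / (L k) ^ 2

lemma wgt_nonneg (L : ℕ → ℝ) (s t : ℝ) (hs : 0 ≤ s) (ht : 0 ≤ t) :
    ∀ k, 0 ≤ wgt L s t k := by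
  intro k
  induction k using Nat.strong_induction_on with
  | _ k ih =>
    match k with
    | 0 => simpa [wgt] using hs
    | 1 => simpa [wgt] using ht
    | k + 2 =>
      simp only [wgt]
      exact div_nonneg (ih k (by omega)) (sq_nonneg _)

lemma wgt_odd_zero (L : ℕ → ℝ) (s : ℝ) : ∀ k, k % 2 = 1 → wgt L s 0 k = 0 := by
  intro k
  induction k using Nat.strong_induction_on with
  | _ k ih =>
    match k with
    | 0 => omega
    | 1 => simp [wgt]
    | k + 2 =>
      intro hk
      simp only [wgt]
      rw [ih k (by omega) (by omega)]
      simp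

lemma wgt_even_zero (L : ℕ → ℝ) (t : ℝ) : ∀ k, k % 2 = 0 → wgt L 0 t k = 0 := by
  intro k
  induction k using Nat.strong_induction_on with
  | _ k ih =>
    match k with
    | 0 => simp [wgt]
    | 1 => omega
    | k + 2 =>
      intro hk
      simp only [wgt]
      rw [ih k (by omega) (by omega)]
      simp

def Mir (n : ℕ) (p q : ℝ[X]) : Prop := ∀ k, q.coeff k = (-1 : ℝ) ^ (n + k) * p.coeff k

lemma mir_single (c : ℝ) : Mir 1 (X + C c) (X - C c) := by
  intro k
  match k with
  | 0 => simp
  | 1 => simp [coeff_one, coeff_X_one]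
  | k + 2 => simp [coeff_X, coeff_C]

lemma mir_mul {n n' : ℕ} {p q p' q' : ℝ[X]} (h : Mir n p q) (h' : Mir n' p' q') :
    Mir (n + n') (p * p') (q * q') := by
  intro k
  rw [coeff_mul, coeff_mul, Finset.mul_sum]
  refine Finset.sum_congr rfl fun x hx => ?_
  have hxk : x.1 + x.2 = k := Finset.HasAntidiagonal.mem_antidiagonal.mp hx
  rw [h x.1, h' x.2]
  have e : (-1 : ℝ) ^ (n + x.1) * ((-1 : ℝ) ^ (n' + x.2)) = (-1 : ℝ) ^ (n + n' + k) := by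
    rw [← pow_add]; congr 1; omega
  calc (-1:ℝ) ^ (n + x.1) * p.coeff x.1 * ((-1:ℝ) ^ (n' + x.2) * p'.coeff x.2)
      = ((-1:ℝ) ^ (n + x.1) * ((-1:ℝ) ^ (n' + x.2))) * (p.coeff x.1 * p'.coeff x.2) := by ring
    _ = (-1:ℝ) ^ (n + n' + k) * (p.coeff x.1 * p'.coeff x.2) := by rw [e]

lemma mir_prod {ι : Type*} [DecidableEq ι] (s : Finset ι) (c : ι → ℝ) :
    Mir s.card (∏ i ∈ s, (X + C (c i))) (∏ i ∈ s, (X - C (c i))) := by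
  induction s using Finset.induction with
  | empty =>
    intro k
    match k with
    | 0 => simp
    | k + 1 => simp [coeff_one]
  | insert a s' hi ih =>
    rw [Finset.prod_insert hi, Finset.prod_insert hi, Finset.card_insert_of_notMem hi,
      add_comm s'.card 1]
    exact mir_mul (mir_single (c a)) ih

lemma coeffs_nonneg_prod {ι : Type*} (s : Finset ι) (f : ι → ℝ[X])
    (h : ∀ i ∈ s, ∀ k, 0 ≤ (f i).coeff k) : ∀ k, 0 ≤ (∏ i ∈ s, f i).coeff k := by
  refine Finset.prod_induction f (fun q => ∀ k, 0 ≤ q.coeff k) ?_ ?_ h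
  · intro a b ha hb k
    rw [coeff_mul]
    exact Finset.sum_nonneg fun x _ => mul_nonneg (ha x.1) (hb x.2)
  · intro k
    match k with
    | 0 => simp
    | k + 1 => simp [coeff_one]

lemma Pcoeff (m : ℕ) (l : Fin m → ℝ) (hl : ∀ i, 0 < l i) :
    (∀ k, 0 ≤ ((X + 1) * ∏ j : Fin m, (X + C (l j)) : ℝ[X]).coeff k) ∧
    0 < ((X + 1) * ∏ j : Fin m, (X + C (l j)) : ℝ[X]).coeff 0 ∧
    0 < ((X + 1) * ∏ j : Fin m, (X + C (l j)) : ℝ[X]).coeff 1 := by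
  set R : ℝ[X] := ∏ j : Fin m, (X + C (l j)) with hR
  have hRn : ∀ k, 0 ≤ R.coeff k := by
    refine coeffs_nonneg_prod _ _ (fun i _ k => ?_)
    match k with
    | 0 => simpa using (hl i).le
    | 1 => simp [coeff_one, coeff_X_one]
    | k + 2 => simp [coeff_X, coeff_C]
  have hR0 : 0 < R.coeff 0 := by
    rw [coeff_zero_eq_eval_zero, hR, eval_prod]
    exact Finset.prod_pos fun i _ => by simpa using hl i
  have hPn : ∀ k, 0 ≤ ((X + 1) * R).coeff k := by
    intro k
    rw [coeff_mul]
    refine Finset.sum_nonneg fun x _ => mul_nonneg ?_ (hRn x.2)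
    match hx : x.1 with
    | 0 => simp
    | 1 => simp [coeff_one, coeff_X_one]
    | n + 2 => simp [coeff_X, coeff_one]
  refine ⟨hPn, ?_, ?_⟩
  · have : ((X + 1) * R).coeff 0 = R.coeff 0 := by simp [mul_coeff_zero]
    rw [this]; exact hR0
  · have : ((X + 1) * R).coeff 1 = R.coeff 0 + R.coeff 1 := by
      rw [add_mul, one_mul, coeff_add, coeff_X_mul]
    rw [this]
    exact add_pos_of_pos_of_nonneg hR0 (hRn 1)

lemma phi_expand (m : ℕ) (l : Fin m → ℝ) (w : ℕ → ℝ) (i : Fin m) :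
    ∑ k ∈ Finset.range (m + 2),
      (w k : ℂ) * ((X ^ (i : ℕ) - C ((((l i : ℝ) : ℂ)) ^ 2) * X ^ ((i : ℕ) + 2)).coeff k)
      = (w (i : ℕ) : ℂ) - (((l i : ℝ) : ℂ)) ^ 2 * (w ((i : ℕ) + 2) : ℂ) := by
  have him : (i : ℕ) ∈ Finset.range (m + 2) := by simp; omega
  have him2 : (i : ℕ) + 2 ∈ Finset.range (m + 2) := by simp
  simp only [coeff_sub, coeff_C_mul, coeff_X_pow, mul_sub, Finset.sum_sub_distrib,
    mul_ite, mul_one, mul_zero, Finset.sum_ite_eq', him, if_pos, him2]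
  ring

theorem stmt6 (m : ℕ) (l : Fin m → ℝ) (hl : ∀ i, 0 < l i) :
    LinearIndependent ℂ (fun i : Fin (m + 2) =>
      if h : (i : ℕ) < m then
        X ^ (i : ℕ) * (1 - C (((l ⟨i, h⟩ : ℝ) : ℂ)) ^ 2 * X ^ 2)
      else if (i : ℕ) = m then
        (X + 1) * ∏ j : Fin m, (X + C ((l j : ℝ) : ℂ))
      else
        (X - 1) * ∏ j : Fin m, (X - C ((l j : ℝ) : ℂ))) := by
  set F : Fin (m + 2) → ℂ[X] := fun i : Fin (m + 2) =>
      if h : (i : ℕ) < m then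
        X ^ (i : ℕ) * (1 - C (((l ⟨i, h⟩ : ℝ) : ℂ)) ^ 2 * X ^ 2)
      else if (i : ℕ) = m then
        (X + 1) * ∏ j : Fin m, (X + C ((l j : ℝ) : ℂ))
      else
        (X - 1) * ∏ j : Fin m, (X - C ((l j : ℝ) : ℂ)) with hF
  rw [Fintype.linearIndependent_iff]
  intro g hg
  set Lf : ℕ → ℝ := fun k => if h : k < m then l ⟨k, h⟩ else 1 with hLf
  have hLpos : ∀ k, 0 < Lf k := by
    intro k; rw [hLf]; dsimp only; split
    · exact hl _
    · norm_num
  set Pc : ℂ[X] := (X + 1) * ∏ j : Fin m, (X + C ((l j : ℝ) : ℂ)) with hPc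
  set Qc : ℂ[X] := (X - 1) * ∏ j : Fin m, (X - C ((l j : ℝ) : ℂ)) with hQc
  set Pr : ℝ[X] := (X + 1) * ∏ j : Fin m, (X + C (l j)) with hPr
  set Qr : ℝ[X] := (X - 1) * ∏ j : Fin m, (X - C (l j)) with hQr
  -- values of F
  have hF1 : ∀ i : Fin m, F (i.castSucc.castSucc)
      = X ^ (i : ℕ) - C ((((l i : ℝ) : ℂ)) ^ 2) * X ^ ((i : ℕ) + 2) := by
    intro i
    have hC : C ((((l i : ℝ) : ℂ)) ^ 2) = (C (((l i : ℝ) : ℂ))) ^ 2 := by rw [map_pow]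
    rw [hF]
    simp only [Fin.coe_castSucc, Fin.is_lt, dif_pos, Fin.eta]
    rw [hC]; ring
  have hF2 : F ((Fin.last m).castSucc) = Pc := by
    rw [hF]; simp [Fin.val_last]
  have hF3 : F (Fin.last (m + 1)) = Qc := by
    rw [hF]; simp [Fin.val_last]
  -- coefficient equations
  have hcoeff : ∀ k : ℕ, ∑ i : Fin (m + 2), g i * (F i).coeff k = 0 := by
    intro k
    have := congrArg (fun p : ℂ[X] => p.coeff k) hg
    simpa [finset_sum_coeff, coeff_smul, smul_eq_mul] using this
  -- the functional applied to the relation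
  have swap : ∀ w : ℕ → ℝ,
      ∑ i : Fin (m + 2), g i * (∑ k ∈ Finset.range (m + 2), (w k : ℂ) * (F i).coeff k) = 0 := by
    intro w
    have : ∑ i : Fin (m + 2), g i * (∑ k ∈ Finset.range (m + 2), (w k : ℂ) * (F i).coeff k)
        = ∑ k ∈ Finset.range (m + 2), (w k : ℂ) * (∑ i : Fin (m + 2), g i * (F i).coeff k) := by
      simp_rw [Finset.mul_sum]
      rw [Finset.sum_comm]
      exact Finset.sum_congr rfl fun k _ => Finset.sum_congr rfl fun i _ => by ring
    rw [this]
    simp [hcoeff]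
  -- kill the first m polynomials
  have hphi0 : ∀ (s t : ℝ) (i : Fin m),
      ∑ k ∈ Finset.range (m + 2), ((wgt Lf s t k : ℝ) : ℂ) * ((F (i.castSucc.castSucc)).coeff k)
        = 0 := by
    intro s t i
    rw [hF1 i, phi_expand m l (wgt Lf s t) i]
    have hrec : wgt Lf s t ((i : ℕ) + 2) = wgt Lf s t (i : ℕ) / (Lf (i : ℕ)) ^ 2 := by
      simp [wgt]
    have hLi : Lf (i : ℕ) = l i := by
      rw [hLf]; simp [i.isLt]
    rw [hrec, hLi]
    have hne : ((l i : ℝ) : ℂ) ≠ 0 := by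
      simpa using (hl i).ne'
    push_cast
    field_simp
    ring
  -- key equation for the two remaining coefficients
  have key : ∀ s t : ℝ,
      g ((Fin.last m).castSucc) *
          ((∑ k ∈ Finset.range (m + 2), wgt Lf s t k * Pr.coeff k : ℝ) : ℂ)
        + g (Fin.last (m + 1)) *
          ((∑ k ∈ Finset.range (m + 2), wgt Lf s t k * Qr.coeff k : ℝ) : ℂ) = 0 := by
    intro s t
    have hPmap : Pc = Pr.map (algebraMap ℝ ℂ) := by
      rw [hPc, hPr]
      simp [Polynomial.map_mul, Polynomial.map_add, Polynomial.map_prod]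
    have hQmap : Qc = Qr.map (algebraMap ℝ ℂ) := by
      rw [hQc, hQr]
      simp [Polynomial.map_mul, Polynomial.map_sub, Polynomial.map_prod]
    have hs := swap (wgt Lf s t)
    rw [Fin.sum_univ_castSucc, Fin.sum_univ_castSucc] at hs
    simp only [hphi0 s t, mul_zero, Finset.sum_const_zero, zero_add] at hs
    rw [hF2, hF3, hPmap, hQmap] at hs
    simp only [coeff_map, Complex.coe_algebraMap] at hs
    have cast1 : ((∑ k ∈ Finset.range (m + 2), wgt Lf s t k * Pr.coeff k : ℝ) : ℂ)
        = ∑ k ∈ Finset.range (m + 2), (wgt Lf s t k : ℂ) * ((Pr.coeff k : ℝ) : ℂ) := by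
      push_cast; rfl
    have cast2 : ((∑ k ∈ Finset.range (m + 2), wgt Lf s t k * Qr.coeff k : ℝ) : ℂ)
        = ∑ k ∈ Finset.range (m + 2), (wgt Lf s t k : ℂ) * ((Qr.coeff k : ℝ) : ℂ) := by
      push_cast; rfl
    rw [cast1, cast2]
    exact hs
  -- real sums and positivity
  obtain ⟨hPn, hP0, hP1⟩ := Pcoeff m l hl
  rw [← hPr] at hPn hP0 hP1
  have hSEpos : 0 < ∑ k ∈ Finset.range (m + 2), wgt Lf 1 0 k * Pr.coeff k := by
    refine Finset.sum_pos' (fun k _ => mul_nonneg (wgt_nonneg Lf 1 0 one_pos.le le_rfl k) (hPn k))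
      ⟨0, by simp, ?_⟩
    simpa [wgt] using hP0
  have hSOpos : 0 < ∑ k ∈ Finset.range (m + 2), wgt Lf 0 1 k * Pr.coeff k := by
    refine Finset.sum_pos' (fun k _ => mul_nonneg (wgt_nonneg Lf 0 1 le_rfl one_pos.le k) (hPn k))
      ⟨1, by simp, ?_⟩
    simpa [wgt] using hP1
  -- mirror relation
  have hmir : Mir (m + 1) Pr Qr := by
    have h2 := mir_mul (mir_single 1) (mir_prod (Finset.univ : Finset (Fin m)) l)
    rw [Finset.card_univ, Fintype.card_fin, add_comm 1 m] at h2
    rw [hPr, hQr]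
    simpa [Polynomial.C_1] using h2
  have hTE : ∑ k ∈ Finset.range (m + 2), wgt Lf 1 0 k * Qr.coeff k
      = (-1 : ℝ) ^ (m + 1) * ∑ k ∈ Finset.range (m + 2), wgt Lf 1 0 k * Pr.coeff k := by
    rw [Finset.mul_sum]
    refine Finset.sum_congr rfl fun k _ => ?_
    rcases Nat.even_or_odd k with he | ho
    · rw [hmir k]
      have hpow : (-1 : ℝ) ^ (m + 1 + k) = (-1 : ℝ) ^ (m + 1) := by
        rw [pow_add, he.neg_one_pow, mul_one]
      rw [hpow]; ring
    · rw [wgt_odd_zero Lf 1 k (Nat.odd_iff.mp ho)]; simp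
  have hTO : ∑ k ∈ Finset.range (m + 2), wgt Lf 0 1 k * Qr.coeff k
      = (-1 : ℝ) ^ m * ∑ k ∈ Finset.range (m + 2), wgt Lf 0 1 k * Pr.coeff k := by
    rw [Finset.mul_sum]
    refine Finset.sum_congr rfl fun k _ => ?_
    rcases Nat.even_or_odd k with he | ho
    · rw [wgt_even_zero Lf 1 k (Nat.even_iff.mp he)]; simp
    · rw [hmir k]
      have hpow : (-1 : ℝ) ^ (m + 1 + k) = (-1 : ℝ) ^ m := by
        rw [show m + 1 + k = m + (1 + k) by omega, pow_add,
          (Nat.even_iff.mpr (by have := Nat.odd_iff.mp ho; omega) : Even (1 + k)).neg_one_pow, mul_one]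
      rw [hpow]; ring
  -- solve for the last two coefficients
  set A : ℂ := g ((Fin.last m).castSucc) with hA'
  set B : ℂ := g (Fin.last (m + 1)) with hB'
  have f1 : A + (-1 : ℂ) ^ (m + 1) * B = 0 := by
    have e1 := key 1 0
    rw [hTE] at e1
    push_cast at e1
    have hne : ((∑ k ∈ Finset.range (m + 2), wgt Lf 1 0 k * Pr.coeff k : ℝ) : ℂ) ≠ 0 :=
      Complex.ofReal_ne_zero.mpr hSEpos.ne'
    have : (A + (-1 : ℂ) ^ (m + 1) * B)
        * ((∑ k ∈ Finset.range (m + 2), wgt Lf 1 0 k * Pr.coeff k : ℝ) : ℂ) = 0 := by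
      push_cast
      linear_combination e1
    rcases mul_eq_zero.mp this with h | h
    · exact h
    · exact absurd h hne
  have f2 : A + (-1 : ℂ) ^ m * B = 0 := by
    have e2 := key 0 1
    rw [hTO] at e2
    push_cast at e2
    have hne : ((∑ k ∈ Finset.range (m + 2), wgt Lf 0 1 k * Pr.coeff k : ℝ) : ℂ) ≠ 0 :=
      Complex.ofReal_ne_zero.mpr hSOpos.ne'
    have : (A + (-1 : ℂ) ^ m * B)
        * ((∑ k ∈ Finset.range (m + 2), wgt Lf 0 1 k * Pr.coeff k : ℝ) : ℂ) = 0 := by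
      push_cast
      linear_combination e2
    rcases mul_eq_zero.mp this with h | h
    · exact h
    · exact absurd h hne
  have hspow : (-1 : ℂ) ^ (m + 1) = -(-1 : ℂ) ^ m := by rw [pow_succ]; ring
  rw [hspow] at f1
  have hAz : A = 0 := by linear_combination (f1 + f2) / 2
  have hBz : B = 0 := by
    have h3 : (-1 : ℂ) ^ m * B = 0 := by linear_combination (f2 - f1) / 2
    rcases mul_eq_zero.mp h3 with h | h
    · exact absurd h (pow_ne_zero m (by norm_num))
    · exact h
  -- remaining coefficients vanish
  have hrest : ∀ k : ℕ,
      ∑ i : Fin m, g (i.castSucc.castSucc) * ((F (i.castSucc.castSucc)).coeff k) = 0 := by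
    intro k
    have h := hcoeff k
    rw [Fin.sum_univ_castSucc, Fin.sum_univ_castSucc] at h
    rw [← hA', ← hB'] at h
    rw [hAz, hBz] at h
    simpa using h
  have hzero : ∀ j, ∀ hj : j < m, g ((⟨j, hj⟩ : Fin m).castSucc.castSucc) = 0 := by
    intro j
    induction j using Nat.strong_induction_on with
    | _ j ih =>
      intro hj
      have hr := hrest j
      have hterm : ∀ b : Fin m, b ∈ Finset.univ → b ≠ ⟨j, hj⟩ →
          g (b.castSucc.castSucc) * ((F (b.castSucc.castSucc)).coeff j) = 0 := by
        intro b _ hb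
        rw [hF1 b]
        by_cases hcase : j = (b : ℕ) + 2
        · have hgb : g (b.castSucc.castSucc) = 0 := by
            have := ih (b : ℕ) (by omega) b.isLt
            simpa [Fin.eta] using this
          rw [hgb, zero_mul]
        · have hne1 : j ≠ (b : ℕ) := by
            intro h
            exact hb (Fin.ext h.symm)
          have hc0 : (X ^ (b : ℕ) - C ((((l b : ℝ) : ℂ)) ^ 2) * X ^ ((b : ℕ) + 2)).coeff j
              = 0 := by
            rw [coeff_sub, coeff_C_mul, coeff_X_pow, coeff_X_pow, if_neg hne1, if_neg hcase]
            ring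
          rw [hc0, mul_zero]
      have hsingle := Finset.sum_eq_single_of_mem (⟨j, hj⟩ : Fin m) (Finset.mem_univ _) hterm
      rw [hsingle] at hr
      rw [hF1] at hr
      have hc1 : (X ^ ((⟨j, hj⟩ : Fin m) : ℕ)
          - C ((((l ⟨j, hj⟩ : ℝ) : ℂ)) ^ 2) * X ^ (((⟨j, hj⟩ : Fin m) : ℕ) + 2)).coeff j
          = 1 := by
        rw [coeff_sub, coeff_C_mul, coeff_X_pow, coeff_X_pow, if_pos rfl, if_neg (by simp)]
        ring
      rw [hc1, mul_one] at hr
      exact hr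
  -- conclude
  intro i
  by_cases h1 : (i : ℕ) < m
  · have : i = ((⟨(i : ℕ), h1⟩ : Fin m).castSucc.castSucc) := by
      apply Fin.ext; simp
    rw [this]
    exact hzero _ h1
  · by_cases h2 : (i : ℕ) = m
    · have : i = (Fin.last m).castSucc := by
        apply Fin.ext; simp [h2]
      rw [this, ← hA']
      exact hAz
    · have : i = Fin.last (m + 1) := by
        apply Fin.ext
        have := i.isLt
        simp only [Fin.val_last]
        omega
      rw [this, ← hB']
      exact hBz
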